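/- Fix κ ≥ 1, r = (r_1,…,r_κ) ∈ ℂ^κ with Re r_i > 0 for all i, real numbers s > 0, R > 1, 𝒦 ≥ 0, λ ∈ ℂ with Re λ ≥ 0, and an integer j ≥ 1. For m ∈ ℤ₊^κ write |m| = m_1+…+m_κ and ⟨m,r⟩ = m_1 r_1+…+m_κ r_κ; for a complex polynomial C(t) = Σ_i a_i t^i set ‖C‖_R = Σ_i |a_i| R^i, and let H^j be the set of families η = (C_m)_{m ∈ ℤ₊^κ∖{0}} of polynomials with deg C_m ≤ 𝒦|m| and ‖η‖_j := Σ_m (|λ+⟨m,r⟩| + 𝒦|m|)^j / |Γ(⟨m,r⟩/s)| · ‖C_m‖_R < ∞. Then the linear map sending η = (C_m) to the family ((λ+⟨m,r⟩)·C_m + dC_m/dt)_m maps H^j into H^{j−1}, preserves the degree bounds deg ≤ 𝒦|m|, and satisfies ‖((λ+⟨m,r⟩)C_m + C_m')_m‖_{j−1} ≤ ‖η‖_j. -/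

import Mathlib

/-- The weighted `ℓ¹`-norm on complex polynomials. -/
noncomputable def normR (R : ℝ) (C : Polynomial ℂ) : ℝ :=
  ∑ i ∈ C.support, ‖C.coeff i‖ * R ^ i

/-- `|m| = m_1 + … + m_κ` for a multi-index `m`. -/
def msize {κ : ℕ} (m : Fin κ → ℕ) : ℕ := ∑ i, m i

/-- `⟨m,r⟩ = m_1 r_1 + … + m_κ r_κ`. -/
noncomputable def mdot {κ : ℕ} (r : Fin κ → ℂ) (m : Fin κ → ℕ) : ℂ := ∑ i, (m i : ℂ) * r i

/-- The Gamma-weighted norm `‖η‖_j`. -/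
noncomputable def normJ {κ : ℕ} (r : Fin κ → ℂ) (s R 𝒦 : ℝ) (lam : ℂ) (j : ℕ)
    (η : (Fin κ → ℕ) → Polynomial ℂ) : ℝ :=
  ∑' m : {m : Fin κ → ℕ // m ≠ 0},
    (‖lam + mdot r m.1‖ + 𝒦 * msize m.1) ^ j /
      ‖Complex.Gamma (mdot r m.1 / (s : ℂ))‖ * normR R (η m.1)

/-- Membership in the space `H^j`. -/
def memHJ {κ : ℕ} (r : Fin κ → ℂ) (s R 𝒦 : ℝ) (lam : ℂ) (j : ℕ)
    (η : (Fin κ → ℕ) → Polynomial ℂ) : Prop :=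
  η 0 = 0 ∧ (∀ m : Fin κ → ℕ, ((η m).natDegree : ℝ) ≤ 𝒦 * msize m) ∧
  Summable (fun m : {m : Fin κ → ℕ // m ≠ 0} =>
    (‖lam + mdot r m.1‖ + 𝒦 * msize m.1) ^ j /
      ‖Complex.Gamma (mdot r m.1 / (s : ℂ))‖ * normR R (η m.1))

lemma normR_nonneg (R : ℝ) (hR : 0 ≤ R) (C : Polynomial ℂ) : 0 ≤ normR R C :=
  Finset.sum_nonneg fun i _ => mul_nonneg (norm_nonneg _) (pow_nonneg hR i)

lemma normR_eq_range (R : ℝ) (C : Polynomial ℂ) {n : ℕ} (h : C.natDegree < n) :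
    normR R C = ∑ i ∈ Finset.range n, ‖C.coeff i‖ * R ^ i := by
  apply Finset.sum_subset
  · intro i hi
    exact Finset.mem_range.mpr (lt_of_le_of_lt (Polynomial.le_natDegree_of_mem_supp i hi) h)
  · intro i _ hi
    simp [Polynomial.notMem_support_iff.mp hi]

lemma normR_add_le (R : ℝ) (hR : 0 ≤ R) (P Q : Polynomial ℂ) :
    normR R (P + Q) ≤ normR R P + normR R Q := by
  set n := max (P + Q).natDegree (max P.natDegree Q.natDegree) + 1 with hn
  have h1 : (P + Q).natDegree < n := Nat.lt_succ_of_le (le_max_left _ _)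
  have h2 : P.natDegree < n := Nat.lt_succ_of_le (le_trans (le_max_left _ _) (le_max_right _ _))
  have h3 : Q.natDegree < n := Nat.lt_succ_of_le (le_trans (le_max_right _ _) (le_max_right _ _))
  rw [normR_eq_range R _ h1, normR_eq_range R P h2, normR_eq_range R Q h3,
    ← Finset.sum_add_distrib]
  apply Finset.sum_le_sum
  intro i _
  have := norm_add_le (P.coeff i) (Q.coeff i)
  have hp : (0:ℝ) ≤ R ^ i := pow_nonneg hR i
  rw [Polynomial.coeff_add]
  nlinarith

lemma normR_Cmul_le (R : ℝ) (hR : 0 ≤ R) (a : ℂ) (P : Polynomial ℂ) :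
    normR R (Polynomial.C a * P) ≤ ‖a‖ * normR R P := by
  have h1 : (Polynomial.C a * P).natDegree < P.natDegree + 1 :=
    Nat.lt_succ_of_le (Polynomial.natDegree_C_mul_le a P)
  rw [normR_eq_range R _ h1, normR_eq_range R P (Nat.lt_succ_self _), Finset.mul_sum]
  apply Finset.sum_le_sum
  intro i _
  rw [Polynomial.coeff_C_mul, norm_mul]
  ring_nf
  exact le_refl _

lemma normR_deriv_le (R : ℝ) (hR : 1 ≤ R) (P : Polynomial ℂ) :
    normR R (Polynomial.derivative P) ≤ P.natDegree * normR R P := by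
  have hR0 : (0:ℝ) ≤ R := zero_le_one.trans hR
  rcases Nat.eq_zero_or_pos P.natDegree with h0 | hpos
  · obtain ⟨c, rfl⟩ := Polynomial.natDegree_eq_zero.mp h0
    simp [normR]
  · set n := P.natDegree with hn
    have hd : (Polynomial.derivative P).natDegree < n :=
      lt_of_le_of_lt (Polynomial.natDegree_derivative_le P) (by omega)
    rw [normR_eq_range R _ hd, normR_eq_range R P (Nat.lt_succ_self n)]
    calc ∑ i ∈ Finset.range n, ‖(Polynomial.derivative P).coeff i‖ * R ^ i
        ≤ ∑ i ∈ Finset.range n, (n : ℝ) * (‖P.coeff (i+1)‖ * R ^ (i+1)) := by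
          apply Finset.sum_le_sum
          intro i hi
          rw [Polynomial.coeff_derivative, norm_mul]
          have hc : ((i:ℂ) + 1) = ((i+1 : ℕ) : ℂ) := by push_cast; ring
          rw [hc, Complex.norm_natCast]
          have hile : ((i+1 : ℕ) : ℝ) ≤ (n : ℝ) := by
            have : i + 1 ≤ n := Finset.mem_range.mp hi
            exact_mod_cast this
          have hRp : R ^ i ≤ R ^ (i+1) := pow_le_pow_right₀ hR (Nat.le_succ i)
          have habs : (0:ℝ) ≤ ‖P.coeff (i+1)‖ := norm_nonneg _
          have hRi : (0:ℝ) ≤ R ^ i := pow_nonneg hR0 i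
          nlinarith [mul_le_mul_of_nonneg_right (mul_le_mul_of_nonneg_left hile habs) hRi,
            mul_le_mul_of_nonneg_left hRp (mul_nonneg habs (Nat.cast_nonneg n))]
      _ ≤ (n : ℝ) * ∑ i ∈ Finset.range (n+1), ‖P.coeff i‖ * R ^ i := by
          rw [Finset.sum_range_succ', ← Finset.mul_sum, mul_add]
          have : (0:ℝ) ≤ (n : ℝ) * (‖P.coeff 0‖ * R ^ 0) :=
            mul_nonneg (Nat.cast_nonneg n)
              (mul_nonneg (norm_nonneg _) (pow_nonneg hR0 0))
          linarith

lemma normR_op_le (R : ℝ) (hR : 1 ≤ R) (a : ℂ) (P : Polynomial ℂ) (D : ℝ)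
    (hD : (P.natDegree : ℝ) ≤ D) :
    normR R (Polynomial.C a * P + Polynomial.derivative P) ≤
      (‖a‖ + D) * normR R P := by
  have hR0 : (0:ℝ) ≤ R := zero_le_one.trans hR
  have h1 := normR_add_le R hR0 (Polynomial.C a * P) (Polynomial.derivative P)
  have h2 := normR_Cmul_le R hR0 a P
  have h3 := normR_deriv_le R hR P
  have hN := normR_nonneg R hR0 P
  nlinarith [mul_le_mul_of_nonneg_right hD hN]

/-- The shifted Euler operator `λ + δ̂`, acting coefficientwise by
`C_m ↦ (λ+⟨m,r⟩)·C_m + dC_m/dt`, maps `H^j` continuously into `H^{j−1}` with norm `≤ 1`. -/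
theorem euler_operator_continuous (κ : ℕ) (hκ : 1 ≤ κ) (r : Fin κ → ℂ)
    (hr : ∀ i, 0 < (r i).re) (s R 𝒦 : ℝ) (hs : 0 < s) (hR : 1 < R) (h𝒦 : 0 ≤ 𝒦)
    (lam : ℂ) (hlam : 0 ≤ lam.re) (j : ℕ) (hj : 1 ≤ j)
    (η : (Fin κ → ℕ) → Polynomial ℂ) (hη : memHJ r s R 𝒦 lam j η) :
    memHJ r s R 𝒦 lam (j - 1)
      (fun m => Polynomial.C (lam + mdot r m) * η m + Polynomial.derivative (η m)) ∧
    normJ r s R 𝒦 lam (j - 1)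
      (fun m => Polynomial.C (lam + mdot r m) * η m + Polynomial.derivative (η m)) ≤
      normJ r s R 𝒦 lam j η := by
  obtain ⟨hz, hdeg, hsum⟩ := hη
  have hR0 : (0:ℝ) ≤ R := le_of_lt (lt_trans zero_lt_one hR)
  have key : ∀ m : Fin κ → ℕ,
      normR R (Polynomial.C (lam + mdot r m) * η m + Polynomial.derivative (η m)) ≤
      (‖lam + mdot r m‖ + 𝒦 * msize m) * normR R (η m) := fun m =>
    normR_op_le R hR.le (lam + mdot r m) (η m) _ (hdeg m)
  have hW0 : ∀ m : Fin κ → ℕ, (0:ℝ) ≤ ‖lam + mdot r m‖ + 𝒦 * msize m := fun m =>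
    add_nonneg (norm_nonneg _) (mul_nonneg h𝒦 (Nat.cast_nonneg _))
  have hterm : ∀ m : {m : Fin κ → ℕ // m ≠ 0},
      (‖lam + mdot r m.1‖ + 𝒦 * msize m.1) ^ (j-1) /
          ‖Complex.Gamma (mdot r m.1 / (s : ℂ))‖ *
          normR R (Polynomial.C (lam + mdot r m.1) * η m.1 +
            Polynomial.derivative (η m.1)) ≤
      (‖lam + mdot r m.1‖ + 𝒦 * msize m.1) ^ j /
          ‖Complex.Gamma (mdot r m.1 / (s : ℂ))‖ * normR R (η m.1) := by
    intro m
    set W := ‖lam + mdot r m.1‖ + 𝒦 * msize m.1 with hWdef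
    set G := ‖Complex.Gamma (mdot r m.1 / (s : ℂ))‖ with hGdef
    have hWG : (0:ℝ) ≤ W ^ (j-1) / G :=
      div_nonneg (pow_nonneg (hW0 m.1) _) (norm_nonneg _)
    have hpow : W ^ (j-1) * W = W ^ j := by
      rw [← pow_succ]
      congr 1
      omega
    calc W ^ (j-1) / G * normR R (Polynomial.C (lam + mdot r m.1) * η m.1 +
            Polynomial.derivative (η m.1))
        ≤ W ^ (j-1) / G * (W * normR R (η m.1)) :=
          mul_le_mul_of_nonneg_left (key m.1) hWG
      _ = W ^ j / G * normR R (η m.1) := by rw [← hpow]; ring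
  have hnn : ∀ m : {m : Fin κ → ℕ // m ≠ 0},
      (0:ℝ) ≤ (‖lam + mdot r m.1‖ + 𝒦 * msize m.1) ^ (j-1) /
          ‖Complex.Gamma (mdot r m.1 / (s : ℂ))‖ *
          normR R (Polynomial.C (lam + mdot r m.1) * η m.1 +
            Polynomial.derivative (η m.1)) := fun m =>
    mul_nonneg (div_nonneg (pow_nonneg (hW0 m.1) _) (norm_nonneg _))
      (normR_nonneg R hR0 _)
  have hsum' : Summable (fun m : {m : Fin κ → ℕ // m ≠ 0} =>
      (‖lam + mdot r m.1‖ + 𝒦 * msize m.1) ^ (j-1) /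
        ‖Complex.Gamma (mdot r m.1 / (s : ℂ))‖ *
        normR R (Polynomial.C (lam + mdot r m.1) * η m.1 +
          Polynomial.derivative (η m.1))) :=
    Summable.of_nonneg_of_le hnn hterm hsum
  refine ⟨⟨?_, ?_, hsum'⟩, ?_⟩
  · simp [hz]
  · intro m
    have hd : (Polynomial.C (lam + mdot r m) * η m +
        Polynomial.derivative (η m)).natDegree ≤ (η m).natDegree :=
      (Polynomial.natDegree_add_le _ _).trans (max_le (Polynomial.natDegree_C_mul_le _ _)
        ((Polynomial.natDegree_derivative_le _).trans (Nat.sub_le _ _)))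
    exact le_trans (by exact_mod_cast hd) (hdeg m)
  · exact Summable.tsum_le_tsum hterm hsum' hsum
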